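/- arXiv:2407.18052 — 2 statements merged into one kernel-verified Lean document; each statement's English description precedes it below -/
import Mathlib

section
/- Let f : ℝⁿ → ℝⁿ be continuously differentiable. The function C(u, v) = ‖v‖²/2 − ⟨f(u), v⟩ is constant along every solution of the system u' = −f(u) + v, v' = 2((Df(u))ᵀ − Df(u)) f(u) + (2Df(u) − (Df(u))ᵀ) v. -/
/-- `C(u, v) = ‖v‖²/2 − ⟨f(u), v⟩` is constant along every solution of
`u' = −f(u) + v`, `v' = 2((Df(u))ᵀ − Df(u)) f(u) + (2Df(u) − (Df(u))ᵀ) v`. -/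
theorem conserved_quantity_C {n : ℕ}
    (f : EuclideanSpace ℝ (Fin n) → EuclideanSpace ℝ (Fin n)) (hf : ContDiff ℝ 1 f)
    (u v : ℝ → EuclideanSpace ℝ (Fin n))
    (hu : ∀ t, HasDerivAt u (-f (u t) + v t) t)
    (hv : ∀ t, HasDerivAt v
      ((2 : ℝ) • ((ContinuousLinearMap.adjoint (fderiv ℝ f (u t)) - fderiv ℝ f (u t)) (f (u t)))
        + ((2 : ℝ) • fderiv ℝ f (u t) - ContinuousLinearMap.adjoint (fderiv ℝ f (u t))) (v t)) t)
    (s t : ℝ) :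
    ‖v s‖ ^ 2 / 2 - (inner ℝ (f (u s)) (v s) : ℝ) =
      ‖v t‖ ^ 2 / 2 - (inner ℝ (f (u t)) (v t) : ℝ) := by
  set g : ℝ → ℝ := fun t => ‖v t‖ ^ 2 / 2 - (inner ℝ (f (u t)) (v t) : ℝ) with hg
  have key : ∀ τ, HasDerivAt g 0 τ := by
    intro τ
    set A := fderiv ℝ f (u τ)
    set b := f (u τ)
    set w := v τ
    have hfd : HasDerivAt (fun t => f (u t)) (A (-b + w)) τ :=
      (hf.differentiable one_ne_zero (u τ)).hasFDerivAt.comp_hasDerivAt τ (hu τ)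
    set v' := (2 : ℝ) • ((ContinuousLinearMap.adjoint A - A) b)
        + ((2 : ℝ) • A - ContinuousLinearMap.adjoint A) w with hv'
    have h1 : HasDerivAt (fun t => (inner ℝ (v t) (v t) : ℝ))
        ((inner ℝ w v' : ℝ) + (inner ℝ v' w : ℝ)) τ := (hv τ).inner ℝ (hv τ)
    have h2 : HasDerivAt (fun t => (inner ℝ (f (u t)) (v t) : ℝ))
        ((inner ℝ b v' : ℝ) + (inner ℝ (A (-b + w)) w : ℝ)) τ := hfd.inner ℝ (hv τ)
    have h3 : HasDerivAt (fun t => (inner ℝ (v t) (v t) : ℝ) / 2 - (inner ℝ (f (u t)) (v t) : ℝ))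
        (((inner ℝ w v' : ℝ) + (inner ℝ v' w : ℝ)) / 2
          - ((inner ℝ b v' : ℝ) + (inner ℝ (A (-b + w)) w : ℝ))) τ := (h1.div_const 2).sub h2
    have heq : g = fun t => (inner ℝ (v t) (v t) : ℝ) / 2 - (inner ℝ (f (u t)) (v t) : ℝ) := by
      funext x
      rw [hg, real_inner_self_eq_norm_sq]
    rw [heq]
    convert h3 using 1
    have e1 : (inner ℝ w v' : ℝ) = (inner ℝ v' w : ℝ) := real_inner_comm _ _
    rw [e1, hv']
    simp only [ContinuousLinearMap.sub_apply, ContinuousLinearMap.smul_apply, inner_add_left,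
      inner_sub_left, inner_smul_left, inner_add_right, inner_sub_right, inner_smul_right,
      map_add, map_neg, inner_neg_left, inner_neg_right,
      ContinuousLinearMap.adjoint_inner_left, ContinuousLinearMap.adjoint_inner_right,
      RCLike.conj_to_real, conj_trivial]
    have hc1 : (inner ℝ (A b) b : ℝ) = inner ℝ b (A b) := real_inner_comm _ _
    have hc2 : (inner ℝ (A w) w : ℝ) = inner ℝ w (A w) := real_inner_comm _ _
    have hc3 : (inner ℝ (A b) w : ℝ) = inner ℝ w (A b) := real_inner_comm _ _
    have hc4 : (inner ℝ (A w) b : ℝ) = inner ℝ b (A w) := real_inner_comm _ _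
    linarith [hc1, hc2, hc3, hc4]
  have hdiff : Differentiable ℝ g := fun τ => (key τ).differentiableAt
  have hderiv : ∀ τ, deriv g τ = 0 := fun τ => (key τ).deriv
  exact is_const_of_deriv_eq_zero hdiff hderiv s t
end

section
/- The function u₁ : ℝ → ℝ² given by u₁(t) = (0, −e^t + √(e^{2t} + 1) − e^{−t} arcsinh(e^t)) is bounded on ℝ and solves the linear equation u₁' = −A(t) u₁ + v₁(t) − g(y₀(t)), where A(t) = Df(y₀(t)) with f(x) = (−x₁(x₁²−1), −x₂), y₀(t) = (−1/√(e^{2t}+1), 0), g(x) = (−x₂, 0), and the second component of the inhomogeneity v₁(t) − g(y₀(t)) equals v₁,₂(t) with v₁ the solution of v₁' = A(t)ᵀ v₁ + 2((Dg)ᵀ − Dg) f(y₀(t)). -/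
noncomputable section

/-- Builds a point of `EuclideanSpace ℝ (Fin 2)` from two coordinates. -/
def mk2 (a b : ℝ) : EuclideanSpace ℝ (Fin 2) := (WithLp.equiv 2 (Fin 2 → ℝ)).symm ![a, b]

/-- The vector field `f(x) = (−x₁(x₁² − 1), −x₂) = −∇V(x)`. -/
def fF (x : EuclideanSpace ℝ (Fin 2)) : EuclideanSpace ℝ (Fin 2) :=
  mk2 (-(x 0) * ((x 0) ^ 2 - 1)) (-(x 1))

/-- The perturbation `g(x) = (−x₂, 0)`. -/
def gF (x : EuclideanSpace ℝ (Fin 2)) : EuclideanSpace ℝ (Fin 2) := mk2 (-(x 1)) 0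

/-- The time-reversed heteroclinic `y₀(t) = (−1/√(e^{2t}+1), 0)`. -/
def y₀ (t : ℝ) : EuclideanSpace ℝ (Fin 2) := mk2 (-1 / Real.sqrt (Real.exp (2 * t) + 1)) 0

/-- The explicit first-order correction
`u₁(t) = (0, −e^t + √(e^{2t}+1) − e^{−t} arcsinh(e^t))`. -/
def u₁ (t : ℝ) : EuclideanSpace ℝ (Fin 2) :=
  mk2 0 (-Real.exp t + Real.sqrt (Real.exp (2 * t) + 1)
    - Real.exp (-t) * Real.arsinh (Real.exp t))

@[simp] lemma mk2_apply0 (a b : ℝ) : mk2 a b 0 = a := rfl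
@[simp] lemma mk2_apply1 (a b : ℝ) : mk2 a b 1 = b := rfl

lemma eq_mk2 (x : EuclideanSpace ℝ (Fin 2)) : x = mk2 (x 0) (x 1) := by
  ext i; fin_cases i <;> rfl

lemma mk2_congr {a b c d : ℝ} (h1 : a = c) (h2 : b = d) : mk2 a b = mk2 c d := by
  rw [h1, h2]

lemma mk2_add (a b c d : ℝ) : mk2 a b + mk2 c d = mk2 (a+c) (b+d) := by
  ext i; fin_cases i <;> simp

lemma mk2_smul (r a b : ℝ) : r • mk2 a b = mk2 (r*a) (r*b) := by
  ext i; fin_cases i <;> simp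

lemma mk2_sub (a b c d : ℝ) : mk2 a b - mk2 c d = mk2 (a-c) (b-d) := by
  ext i; fin_cases i <;> simp

lemma mk2_neg (a b : ℝ) : -mk2 a b = mk2 (-a) (-b) := by
  ext i; fin_cases i <;> simp

lemma norm_mk2 (a b : ℝ) : ‖mk2 a b‖ = Real.sqrt (a^2 + b^2) := by
  rw [EuclideanSpace.norm_eq]
  simp [Fin.sum_univ_two, sq_abs]

lemma toECLM_mk2 (M : Matrix (Fin 2) (Fin 2) ℝ) (a b : ℝ) :
    Matrix.toEuclideanCLM (𝕜 := ℝ) M (mk2 a b) =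
      mk2 (M 0 0 * a + M 0 1 * b) (M 1 0 * a + M 1 1 * b) := by
  rw [mk2, WithLp.equiv_symm_apply, Matrix.toEuclideanCLM_toLp]
  congr 1
  funext i
  fin_cases i <;>
    simp [Matrix.toLin'_apply, Matrix.mulVec, dotProduct, Fin.sum_univ_two]

lemma hasDerivAt_mk2 {a b : ℝ → ℝ} {a' b' t : ℝ} (ha : HasDerivAt a a' t)
    (hb : HasDerivAt b b' t) :
    HasDerivAt (fun s => mk2 (a s) (b s)) (mk2 a' b') t := by
  have h : HasDerivAt (fun s => ![a s, b s]) ![a', b'] t := by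
    rw [hasDerivAt_pi]
    intro i; fin_cases i <;> simpa
  exact ((PiLp.continuousLinearEquiv 2 ℝ
    (fun _ : Fin 2 => ℝ)).symm.toContinuousLinearMap.hasFDerivAt.comp_hasDerivAt t h :)

lemma hasFDerivAt_mk2' {c₀ c₁ : EuclideanSpace ℝ (Fin 2) → ℝ}
    {d₀ d₁ : EuclideanSpace ℝ (Fin 2) →L[ℝ] ℝ} {p : EuclideanSpace ℝ (Fin 2)}
    (h₀ : HasFDerivAt c₀ d₀ p) (h₁ : HasFDerivAt c₁ d₁ p)
    {L : EuclideanSpace ℝ (Fin 2) →L[ℝ] EuclideanSpace ℝ (Fin 2)}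
    (hL : ∀ w, L w = mk2 (d₀ w) (d₁ w)) :
    HasFDerivAt (fun x => mk2 (c₀ x) (c₁ x)) L p := by
  have hF : HasFDerivAt (fun x => ![c₀ x, c₁ x])
      (ContinuousLinearMap.pi ![d₀, d₁]) p := by
    apply hasFDerivAt_pi''
    intro i
    fin_cases i <;> simpa [ContinuousLinearMap.proj_pi] using ‹_›
  have h2 := ((PiLp.continuousLinearEquiv 2 ℝ
    (fun _ : Fin 2 => ℝ)).symm.toContinuousLinearMap.hasFDerivAt (x := ![c₀ p, c₁ p])).comp p hF
  refine h2.congr_fderiv ?_; symm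
  refine ContinuousLinearMap.ext fun w => ?_
  rw [hL]
  ext i; fin_cases i <;> rfl

def Gm : Matrix (Fin 2) (Fin 2) ℝ := !![0, -1; 0, 0]

lemma gF_eq : gF = ⇑(Matrix.toEuclideanCLM (𝕜 := ℝ) Gm) := by
  funext x
  rw [gF, eq_mk2 x, toECLM_mk2]
  simp [Gm]

lemma fderiv_gF (p : EuclideanSpace ℝ (Fin 2)) :
    fderiv ℝ gF p = Matrix.toEuclideanCLM (𝕜 := ℝ) Gm := by
  rw [gF_eq, ContinuousLinearMap.fderiv]

def Am (a : ℝ) : Matrix (Fin 2) (Fin 2) ℝ := !![-(3*a^2 - 1), 0; 0, -1]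

lemma hasFDerivAt_fF (p : EuclideanSpace ℝ (Fin 2)) :
    HasFDerivAt fF (Matrix.toEuclideanCLM (𝕜 := ℝ) (Am (p 0))) p := by
  have hφ : HasDerivAt (fun y : ℝ => -y * (y^2 - 1)) (-(3*(p 0)^2 - 1)) (p 0) := by
    have := ((hasDerivAt_id (p 0)).neg.mul (((hasDerivAt_id (p 0)).pow 2).sub_const 1))
    refine this.congr_deriv ?_; symm
    simp; ring
  have hproj0 : HasFDerivAt (fun x : EuclideanSpace ℝ (Fin 2) => x 0)
      (PiLp.proj (𝕜 := ℝ) 2 (fun _ : Fin 2 => ℝ) 0) p :=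
    (PiLp.proj (𝕜 := ℝ) 2 (fun _ : Fin 2 => ℝ) 0).hasFDerivAt
  have hproj1 : HasFDerivAt (fun x : EuclideanSpace ℝ (Fin 2) => x 1)
      (PiLp.proj (𝕜 := ℝ) 2 (fun _ : Fin 2 => ℝ) 1) p :=
    (PiLp.proj (𝕜 := ℝ) 2 (fun _ : Fin 2 => ℝ) 1).hasFDerivAt
  have h₀ : HasFDerivAt (fun x : EuclideanSpace ℝ (Fin 2) => -(x 0) * ((x 0)^2 - 1))
      ((-(3*(p 0)^2 - 1)) • (PiLp.proj (𝕜 := ℝ) 2 (fun _ : Fin 2 => ℝ) 0)) p := by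
    have := hφ.comp_hasFDerivAt p hproj0
    refine this.congr_fderiv ?_
    simp
  have h₁ : HasFDerivAt (fun x : EuclideanSpace ℝ (Fin 2) => -(x 1))
      ((-1 : ℝ) • (PiLp.proj (𝕜 := ℝ) 2 (fun _ : Fin 2 => ℝ) 1)) p :=
    (hasDerivAt_neg (p 1)).comp_hasFDerivAt p hproj1
  refine hasFDerivAt_mk2' h₀ h₁ (fun w => ?_)
  rw [eq_mk2 w, toECLM_mk2]
  apply mk2_congr <;>
    simp [Am, PiLp.proj_apply]

lemma fderiv_fF (p : EuclideanSpace ℝ (Fin 2)) :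
    fderiv ℝ fF p = Matrix.toEuclideanCLM (𝕜 := ℝ) (Am (p 0)) :=
  (hasFDerivAt_fF p).fderiv

lemma adjoint_toECLM (M : Matrix (Fin 2) (Fin 2) ℝ) :
    ContinuousLinearMap.adjoint (Matrix.toEuclideanCLM (𝕜 := ℝ) M)
      = Matrix.toEuclideanCLM (𝕜 := ℝ) M.transpose := by
  rw [← ContinuousLinearMap.star_eq_adjoint, ← map_star]
  congr 1

/-- `u₁` is bounded on `ℝ` and solves
`u₁' = −A(t) u₁ + v₁(t) − g(y₀(t))` with `A(t) = Df(y₀(t))`, where `v₁` is the bounded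
solution of `v₁' = A(t)ᵀ v₁ + 2((Dg)ᵀ − Dg) f(y₀(t))`; moreover the second component of
the inhomogeneity `v₁ − g(y₀)` is `v₁,₂`. -/
theorem u₁_bounded_and_solves :
    ∃ v₁ : ℝ → EuclideanSpace ℝ (Fin 2),
      (∀ t, HasDerivAt v₁
        (ContinuousLinearMap.adjoint (fderiv ℝ fF (y₀ t)) (v₁ t)
          + (2 : ℝ) • ((ContinuousLinearMap.adjoint (fderiv ℝ gF (y₀ t))
              - fderiv ℝ gF (y₀ t)) (fF (y₀ t)))) t) ∧
      (∃ M, ∀ t, ‖v₁ t‖ ≤ M) ∧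
      (∀ t, (v₁ t - gF (y₀ t)) 1 = v₁ t 1) ∧
      (∀ t, HasDerivAt u₁ (-(fderiv ℝ fF (y₀ t)) (u₁ t) + v₁ t - gF (y₀ t)) t) ∧
      (∃ M, ∀ t, ‖u₁ t‖ ≤ M) := by
  set S : ℝ → ℝ := fun t => Real.exp (2 * t) + 1 with hS
  have hSpos : ∀ t, 0 < S t := fun t => by positivity
  have hsq : ∀ t, 0 < Real.sqrt (S t) := fun t => Real.sqrt_pos.mpr (hSpos t)
  have hsq1 : ∀ t, 1 ≤ Real.sqrt (S t) := fun t => by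
    rw [show (1:ℝ) = Real.sqrt 1 from (Real.sqrt_one).symm]
    exact Real.sqrt_le_sqrt (by simp only [hS]; nlinarith [Real.exp_pos (2*t)])
  have hsqS : ∀ t, Real.sqrt (S t) ^ 2 = S t := fun t => Real.sq_sqrt (hSpos t).le
  have hexp2 : ∀ t, Real.exp (2 * t) = Real.exp t ^ 2 := fun t => by
    rw [show (2:ℝ) * t = t + t by ring, Real.exp_add, sq]
  have hSt : ∀ t, S t = Real.exp t ^ 2 + 1 := fun t => by
    simp only [hS]; rw [hexp2]
  have hee : ∀ t, Real.exp (-t) * Real.exp t = 1 := fun t => by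
    rw [← Real.exp_add]; simp
  set v₂ : ℝ → ℝ := fun t =>
    2 * Real.exp (-t) * Real.arsinh (Real.exp t) - 2 / Real.sqrt (S t) with hv₂
  -- derivative of √(S t) and arsinh (exp t)
  have hsqder : ∀ t, HasDerivAt (fun s => Real.sqrt (S s))
      (Real.exp (2*t) / Real.sqrt (S t)) t := by
    intro t
    have hin : HasDerivAt S (2 * Real.exp (2*t)) t := by
      rw [hS]
      have h := (((hasDerivAt_id t).const_mul 2).exp).add_const 1
      simp only [id_eq] at h
      refine h.congr_deriv ?_; symm
      ring
    have := (Real.hasDerivAt_sqrt (hSpos t).ne').comp t hin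
    refine this.congr_deriv ?_; symm
    field_simp
  have harsder : ∀ t, HasDerivAt (fun s => Real.arsinh (Real.exp s))
      (Real.exp t / Real.sqrt (S t)) t := by
    intro t
    have := (Real.hasDerivAt_arsinh (Real.exp t)).comp t (Real.hasDerivAt_exp t)
    refine this.congr_deriv ?_; symm
    rw [show (1:ℝ) + Real.exp t ^ 2 = S t by rw [hSt t]; ring]
    rw [div_eq_mul_inv, mul_comm]
  refine ⟨fun t => mk2 0 (v₂ t), ?_, ?_, ?_, ?_, ?_⟩
  · -- v₁ solves its ODE
    intro t
    have hv₂der : HasDerivAt v₂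
        (-(2 * Real.exp (-t) * Real.arsinh (Real.exp t)) + 2 / Real.sqrt (S t)
          + 2 * Real.exp (2*t) / (S t * Real.sqrt (S t))) t := by
      have hexpneg : HasDerivAt (fun s : ℝ => 2 * Real.exp (-s)) (-(2 * Real.exp (-t))) t := by
        simpa using ((hasDerivAt_neg t).exp.const_mul 2)
      have h1 := hexpneg.mul (harsder t)
      have h2 := (hasDerivAt_const t (2:ℝ)).div (hsqder t) (hsq t).ne'
      have h3 := h1.sub h2
      have hv : v₂ = fun s => 2 * Real.exp (-s) * Real.arsinh (Real.exp s)
          - 2 / Real.sqrt (S s) := rfl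
      rw [hv]
      refine h3.congr_deriv ?_; symm
      have hab : 2 * Real.exp (-t) * (Real.exp t / Real.sqrt (S t))
          = 2 / Real.sqrt (S t) := by
        field_simp
        linear_combination (Real.sqrt (S t))⁻¹ * hee t
      have hr3 : S t * Real.sqrt (S t) = Real.sqrt (S t)^3 := by
        linear_combination (-(Real.sqrt (S t))) * hsqS t
      rw [hab, hr3]
      have hq : Real.sqrt (S t)^2 = Real.exp (2*t) + 1 := by rw [hsqS t]
      field_simp
      ring
    have goal : HasDerivAt (fun s => mk2 (0:ℝ) (v₂ s))
        (mk2 0 (-(2 * Real.exp (-t) * Real.arsinh (Real.exp t)) + 2 / Real.sqrt (S t)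
          + 2 * Real.exp (2*t) / (S t * Real.sqrt (S t)))) t :=
      hasDerivAt_mk2 (hasDerivAt_const t 0) hv₂der
    have hRHS : (ContinuousLinearMap.adjoint (fderiv ℝ fF (y₀ t)) (mk2 0 (v₂ t))
          + (2 : ℝ) • ((ContinuousLinearMap.adjoint (fderiv ℝ gF (y₀ t))
              - fderiv ℝ gF (y₀ t)) (fF (y₀ t))))
        = mk2 0 (-(2 * Real.exp (-t) * Real.arsinh (Real.exp t)) + 2 / Real.sqrt (S t)
          + 2 * Real.exp (2*t) / (S t * Real.sqrt (S t))) := by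
      rw [fderiv_fF, fderiv_gF, adjoint_toECLM, adjoint_toECLM, ← map_sub,
        show fF (y₀ t) = mk2 (-((y₀ t) 0) * (((y₀ t) 0)^2 - 1)) (-((y₀ t) 1)) from rfl,
        show ((y₀ t) 0) = -1 / Real.sqrt (S t) from rfl,
        show ((y₀ t) 1) = (0:ℝ) from rfl,
        toECLM_mk2, toECLM_mk2, mk2_smul, mk2_add]
      apply mk2_congr
      · simp [Am, Gm]
      · simp only [Am, Gm, Matrix.transpose_apply, Matrix.sub_apply, Matrix.cons_val',
          Matrix.cons_val_zero, Matrix.cons_val_one, Matrix.head_cons, Matrix.of_apply,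
          Matrix.empty_val', Matrix.cons_val_fin_one, Matrix.transpose]
        rw [hv₂]
        have h1 : ((-1 : ℝ)/Real.sqrt (S t))^2 = 1 / S t := by
          rw [div_pow, ← hsqS t]; norm_num
        rw [h1]
        have hE : S t = Real.exp (2*t) + 1 := rfl
        simp only [Matrix.vecHead, Matrix.vecTail]
        have h5 := (hsq t).ne'
        have h6 := (hSpos t).ne'
        field_simp
        linear_combination 2 * hE
    rw [hRHS]
    exact goal
  · -- v₁ bounded
    refine ⟨4, fun t => ?_⟩
    rw [norm_mk2]
    rw [show (0:ℝ)^2 + v₂ t^2 = v₂ t^2 by ring, Real.sqrt_sq_eq_abs]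
    have harsle : Real.arsinh (Real.exp t) ≤ Real.exp t := by
      rw [← Real.sinh_le_sinh, Real.sinh_arsinh]
      by_contra h
      exact absurd (Real.sinh_lt_self_iff.mp (lt_of_not_ge h)) (not_lt.mpr (Real.exp_pos t).le)
    have hars0 : 0 ≤ Real.arsinh (Real.exp t) := Real.arsinh_nonneg_iff.mpr (Real.exp_pos t).le
    have h2 : 2 * Real.exp (-t) * Real.arsinh (Real.exp t) ≤ 2 := by
      calc 2 * Real.exp (-t) * Real.arsinh (Real.exp t)
          ≤ 2 * Real.exp (-t) * Real.exp t := by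
            apply mul_le_mul_of_nonneg_left harsle (by positivity)
        _ = 2 := by rw [mul_assoc, hee t]; ring
    have h1 : 0 ≤ 2 * Real.exp (-t) * Real.arsinh (Real.exp t) := by positivity
    have h3 : 0 ≤ 2 / Real.sqrt (S t) := by positivity
    have h4 : 2 / Real.sqrt (S t) ≤ 2 := by
      rw [div_le_iff₀ (hsq t)]
      nlinarith [hsq1 t]
    rw [hv₂, abs_sub_le_iff]
    constructor <;> nlinarith
  · -- second component
    intro t
    rw [show gF (y₀ t) = mk2 (-((y₀ t) 1)) 0 from rfl,
      show ((y₀ t) 1) = (0:ℝ) from rfl, mk2_sub]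
    simp
  · -- u₁ solves its ODE
    intro t
    set u₂ : ℝ → ℝ := fun s => -Real.exp s + Real.sqrt (S s)
      - Real.exp (-s) * Real.arsinh (Real.exp s) with hu₂
    have hu : u₁ = fun s => mk2 0 (u₂ s) := rfl
    have hu₂der : HasDerivAt u₂
        (-Real.exp t + Real.exp (2*t) / Real.sqrt (S t)
          + Real.exp (-t) * Real.arsinh (Real.exp t) - 1 / Real.sqrt (S t)) t := by
      have hexpneg : HasDerivAt (fun s : ℝ => Real.exp (-s)) (-Real.exp (-t)) t := by
        simpa using (hasDerivAt_neg t).exp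
      have h1 := ((Real.hasDerivAt_exp t).neg.add (hsqder t)).sub (hexpneg.mul (harsder t))
      rw [hu₂]
      refine h1.congr_deriv ?_; symm
      field_simp [hee t]
      rw [mul_add, ← mul_div_assoc, hee t]; ring
    have goal : HasDerivAt u₁
        (mk2 0 (-Real.exp t + Real.exp (2*t) / Real.sqrt (S t)
          + Real.exp (-t) * Real.arsinh (Real.exp t) - 1 / Real.sqrt (S t))) t := by
      rw [hu]
      exact hasDerivAt_mk2 (hasDerivAt_const t 0) hu₂der
    have hRHS : (-(fderiv ℝ fF (y₀ t)) (u₁ t) + mk2 0 (v₂ t) - gF (y₀ t))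
        = mk2 0 (-Real.exp t + Real.exp (2*t) / Real.sqrt (S t)
          + Real.exp (-t) * Real.arsinh (Real.exp t) - 1 / Real.sqrt (S t)) := by
      rw [fderiv_fF,
        show u₁ t = mk2 0 (u₂ t) from rfl,
        show gF (y₀ t) = mk2 (-((y₀ t) 1)) 0 from rfl,
        show ((y₀ t) 1) = (0:ℝ) from rfl,
        show ((y₀ t) 0) = -1 / Real.sqrt (S t) from rfl,
        toECLM_mk2, mk2_neg, mk2_add, mk2_sub]
      apply mk2_congr
      · simp [Am]
      · simp only [Am, Matrix.cons_val', Matrix.cons_val_zero, Matrix.cons_val_one,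
          Matrix.head_cons, Matrix.of_apply, Matrix.empty_val', Matrix.cons_val_fin_one]
        rw [hv₂, hu₂]
        have hE : S t = Real.exp (2*t) + 1 := rfl
        simp only [Matrix.vecHead, Matrix.vecTail]
        have hq : Real.sqrt (S t)^2 = Real.exp (2*t) + 1 := by rw [hsqS t]
        have h5 := (hsq t).ne'
        field_simp
        linear_combination hq + congrArg Real.exp (mul_comm 2 t)
    rw [hRHS]
    exact goal
  · -- u₁ bounded
    refine ⟨2, fun t => ?_⟩
    rw [show u₁ t = mk2 0 (-Real.exp t + Real.sqrt (S t)
      - Real.exp (-t) * Real.arsinh (Real.exp t)) from rfl, norm_mk2]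
    rw [show (0:ℝ)^2 + (-Real.exp t + Real.sqrt (S t)
        - Real.exp (-t) * Real.arsinh (Real.exp t))^2
      = ((-Real.exp t + Real.sqrt (S t)) - Real.exp (-t) * Real.arsinh (Real.exp t))^2 by ring,
      Real.sqrt_sq_eq_abs]
    have hle1 : Real.exp t ≤ Real.sqrt (S t) := by
      rw [Real.le_sqrt (Real.exp_pos t).le (hSpos t).le]
      rw [hSt t]; nlinarith
    have hle2 : Real.sqrt (S t) ≤ Real.exp t + 1 := by
      rw [show Real.exp t + 1 = Real.sqrt ((Real.exp t + 1)^2) by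
        rw [Real.sqrt_sq (by positivity)]]
      apply Real.sqrt_le_sqrt
      rw [hSt t]
      nlinarith [Real.exp_pos t]
    have harsle : Real.arsinh (Real.exp t) ≤ Real.exp t := by
      rw [← Real.sinh_le_sinh, Real.sinh_arsinh]
      by_contra h
      exact absurd (Real.sinh_lt_self_iff.mp (lt_of_not_ge h)) (not_lt.mpr (Real.exp_pos t).le)
    have hars0 : 0 ≤ Real.arsinh (Real.exp t) := Real.arsinh_nonneg_iff.mpr (Real.exp_pos t).le
    have h2 : Real.exp (-t) * Real.arsinh (Real.exp t) ≤ 1 := by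
      calc Real.exp (-t) * Real.arsinh (Real.exp t)
          ≤ Real.exp (-t) * Real.exp t := by
            apply mul_le_mul_of_nonneg_left harsle (by positivity)
        _ = 1 := hee t
    have h3 : 0 ≤ Real.exp (-t) * Real.arsinh (Real.exp t) := by positivity
    rw [abs_sub_le_iff]
    constructor <;> nlinarith


end
end
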